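/- For every integer n ≥ 2 and every substitution probability q with 0 < q < 1/8, the probability P_α(n,q) that Fitch's maximum parsimony algorithm applied to a character generated on the balanced binary tree of depth n (with substitution probability q on every edge, root in state α) returns the state set {α} satisfies P_α(n,q) > (1/2)·(1 − 2q/(1−2q) + √((1−8q)(1−4q))/(1−2q)²). -/

import Mathlib

/-!
Model: rooted binary phylogenetic trees whose edges carry substitution
probabilities, evolving binary characters (states `true` = α, `false` = β)
under the two-state symmetric (Neyman) model, and Fitch's maximum parsimony
algorithm.
-/

/-- A rooted binary tree; an internal node records the substitution
probabilities on the edges to its two children. -/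
inductive PTree where
  | leaf : PTree
  | node (p₁ p₂ : ℝ) (t₁ t₂ : PTree) : PTree

/-- The type of binary characters on a tree: an assignment of a state
(`true` = α, `false` = β) to each leaf. -/
def PTree.Char : PTree → Type
  | .leaf => Bool
  | .node _ _ t₁ t₂ => t₁.Char × t₂.Char

instance PTree.Char.instFintype : (t : PTree) → Fintype t.Char
  | .leaf => inferInstanceAs (Fintype Bool)
  | .node _ _ t₁ t₂ =>
      letI := PTree.Char.instFintype t₁
      letI := PTree.Char.instFintype t₂
      inferInstanceAs (Fintype (_ × _))

instance PTree.Char.instDecidableEq : (t : PTree) → DecidableEq t.Char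
  | .leaf => inferInstanceAs (DecidableEq Bool)
  | .node _ _ t₁ t₂ =>
      letI := PTree.Char.instDecidableEq t₁
      letI := PTree.Char.instDecidableEq t₂
      inferInstanceAs (DecidableEq (_ × _))

/-- Single-edge transition probability of the two-state symmetric model:
conditional on the parent being in state `s`, the child is in state `s'`
with probability `1 - p` if `s' = s` and `p` otherwise. -/
def transProb (p : ℝ) (s s' : Bool) : ℝ := if s' = s then 1 - p else p

/-- `t.charProb s c` is the probability that the character `c` is generated
at the leaves of `t` conditional on the root of `t` being in state `s`
(substitutions happen independently across edges). -/
def PTree.charProb : (t : PTree) → Bool → t.Char → ℝ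
  | .leaf, s, c => @ite ℝ (c = s) (instDecidableEqBool c s) 1 0
  | .node p₁ p₂ t₁ t₂, s, c =>
      (∑ s₁ : Bool, transProb p₁ s s₁ * t₁.charProb s₁ c.1) *
      (∑ s₂ : Bool, transProb p₂ s s₂ * t₂.charProb s₂ c.2)

/-- The state set assigned to the root by Fitch's maximum parsimony
algorithm: a leaf in state `s` gets `{s}`; an internal node gets the
intersection of the children's state sets if nonempty, else their union. -/
def PTree.fitch : (t : PTree) → t.Char → Finset Bool
  | .leaf, c => {c}
  | .node _ _ t₁ t₂, c =>
      if (t₁.fitch c.1 ∩ t₂.fitch c.2).Nonempty then t₁.fitch c.1 ∩ t₂.fitch c.2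
      else t₁.fitch c.1 ∪ t₂.fitch c.2

/-- `P_α`: probability, conditional on the root being in state α, that MP
returns the state set `{α}`. -/
noncomputable def PTree.probAlpha (t : PTree) : ℝ :=
  ∑ c : t.Char, if t.fitch c = {true} then t.charProb true c else 0

/-- `P_β`: probability, conditional on the root being in state α, that MP
returns the state set `{β}`. -/
noncomputable def PTree.probBeta (t : PTree) : ℝ :=
  ∑ c : t.Char, if t.fitch c = {false} then t.charProb true c else 0

/-- `P_{αβ}`: probability, conditional on the root being in state α, that MP
returns the state set `{α, β}`. -/
noncomputable def PTree.probBoth (t : PTree) : ℝ :=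
  ∑ c : t.Char, if t.fitch c = ({true, false} : Finset Bool) then t.charProb true c else 0

/-- The reconstruction accuracy `RA = UA + AA/2` of maximum parsimony on all
leaves of `t`, the conditioning root state being the root of `t` itself. -/
noncomputable def PTree.RA (t : PTree) : ℝ := t.probAlpha + t.probBoth / 2

/-- Probability of the character `c` on `t` conditional on the state `s` of an
ancestor vertex joined to the root of `t` by an edge of substitution
probability `p`. -/
noncomputable def PTree.charProbVia (t : PTree) (p : ℝ) (s : Bool) (c : t.Char) : ℝ :=
  ∑ s' : Bool, transProb p s s' * t.charProb s' c

/-- Reconstruction accuracy of MP applied to the subtree `t` (rooted at `y`),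
where the ancestral state being estimated is that of a vertex `ρ` joined to
`y` by an edge of substitution probability `p`:
`RA = P(MP = {α} | ρ = α) + (1/2)·P(MP = {α,β} | ρ = α)`. -/
noncomputable def PTree.RAVia (t : PTree) (p : ℝ) : ℝ :=
  (∑ c : t.Char, if t.fitch c = {true} then t.charProbVia p true c else 0) +
  (∑ c : t.Char, if t.fitch c = ({true, false} : Finset Bool) then t.charProbVia p true c else 0) / 2

/-- All edge substitution probabilities lie in `[0, 1/2]`. -/
def PTree.valid : PTree → Prop
  | .leaf => True
  | .node p₁ p₂ t₁ t₂ => 0 ≤ p₁ ∧ p₁ ≤ 1/2 ∧ 0 ≤ p₂ ∧ p₂ ≤ 1/2 ∧ t₁.valid ∧ t₂.valid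

/-- The list of net substitution probabilities from the root to each leaf
(obtained by chaining the single-edge substitution probabilities). -/
def PTree.leafFlipProbs : PTree → List ℝ
  | .leaf => [0]
  | .node p₁ p₂ t₁ t₂ =>
      (t₁.leafFlipProbs.map fun r => (1 - p₁) * r + p₁ * (1 - r)) ++
      (t₂.leafFlipProbs.map fun r => (1 - p₂) * r + p₂ * (1 - r))

/-- The balanced binary tree of depth `n` with substitution probability `q`
on every edge. -/
def balanced (q : ℝ) : ℕ → PTree
  | 0 => .leaf
  | n + 1 => .node q q (balanced q n) (balanced q n)

/-- `P_α(n,q)` for the balanced tree of depth `n`. -/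
noncomputable def Palpha (n : ℕ) (q : ℝ) : ℝ := (balanced q n).probAlpha

/-- `P_β(n,q)` for the balanced tree of depth `n`. -/
noncomputable def Pbeta (n : ℕ) (q : ℝ) : ℝ := (balanced q n).probBeta

/-- `P_{αβ}(n,q)` for the balanced tree of depth `n`. -/
noncomputable def Palphabeta (n : ℕ) (q : ℝ) : ℝ := (balanced q n).probBoth

open Finset

lemma fitch_cases : ∀ (t : PTree) (c : t.Char),
    t.fitch c = {true} ∨ t.fitch c = {false} ∨ t.fitch c = ({true, false} : Finset Bool) := by
  intro t
  induction t with
  | leaf =>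
    intro c
    cases c
    · right; left; rfl
    · left; rfl
  | node p₁ p₂ t₁ t₂ ih₁ ih₂ =>
    intro c
    rcases ih₁ c.1 with h₁ | h₁ | h₁ <;> rcases ih₂ c.2 with h₂ | h₂ | h₂ <;>
      simp only [PTree.fitch, h₁, h₂] <;> decide

/-- `Wf t s S` : probability that MP returns `S`, conditional on root state `s`. -/
noncomputable def Wf (t : PTree) (s : Bool) (S : Finset Bool) : ℝ :=
  ∑ c : t.Char, if t.fitch c = S then t.charProb s c else 0

lemma key (t : PTree) (w : t.Char → ℝ) (φ : Finset Bool → ℝ) :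
    ∑ c : t.Char, φ (t.fitch c) * w c =
      φ {true} * (∑ c : t.Char, if t.fitch c = {true} then w c else 0) +
      φ {false} * (∑ c : t.Char, if t.fitch c = {false} then w c else 0) +
      φ {true, false} * (∑ c : t.Char, if t.fitch c = ({true, false} : Finset Bool) then w c else 0) := by
  rw [Finset.mul_sum, Finset.mul_sum, Finset.mul_sum, ← Finset.sum_add_distrib,
    ← Finset.sum_add_distrib]
  apply Finset.sum_congr rfl
  intro c _
  have e1 : ({true} : Finset Bool) ≠ {false} := by decide
  have e2 : ({true} : Finset Bool) ≠ {true, false} := by decide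
  have e3 : ({false} : Finset Bool) ≠ {true, false} := by decide
  rcases fitch_cases t c with h | h | h <;> rw [h] <;>
    simp [e1, e2, e3, e1.symm, e2.symm, e3.symm]
/-- combine operation of Fitch's rule -/
def cmb (S₁ S₂ : Finset Bool) : Finset Bool :=
  if (S₁ ∩ S₂).Nonempty then S₁ ∩ S₂ else S₁ ∪ S₂

noncomputable def EW (p : ℝ) (t : PTree) (s : Bool) (S : Finset Bool) : ℝ :=
  transProb p s true * Wf t true S + transProb p s false * Wf t false S

lemma Wf_node (p₁ p₂ : ℝ) (t₁ t₂ : PTree) (s : Bool) (S : Finset Bool) (Φ : Finset Bool → Finset Bool → ℝ)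
    (hΦ : ∀ S₁ S₂, Φ S₁ S₂ = if cmb S₁ S₂ = S then 1 else 0) :
    Wf (.node p₁ p₂ t₁ t₂) s S =
      Φ {true} {true} * (EW p₁ t₁ s {true} * EW p₂ t₂ s {true}) +
      Φ {true} {false} * (EW p₁ t₁ s {true} * EW p₂ t₂ s {false}) +
      Φ {true} {true, false} * (EW p₁ t₁ s {true} * EW p₂ t₂ s {true, false}) +
      Φ {false} {true} * (EW p₁ t₁ s {false} * EW p₂ t₂ s {true}) +
      Φ {false} {false} * (EW p₁ t₁ s {false} * EW p₂ t₂ s {false}) +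
      Φ {false} {true, false} * (EW p₁ t₁ s {false} * EW p₂ t₂ s {true, false}) +
      Φ {true, false} {true} * (EW p₁ t₁ s {true, false} * EW p₂ t₂ s {true}) +
      Φ {true, false} {false} * (EW p₁ t₁ s {true, false} * EW p₂ t₂ s {false}) +
      Φ {true, false} {true, false} * (EW p₁ t₁ s {true, false} * EW p₂ t₂ s {true, false}) := by
  -- notation
  set g₁ : t₁.Char → ℝ := fun c₁ => ∑ s₁ : Bool, transProb p₁ s s₁ * t₁.charProb s₁ c₁ with hg₁
  set g₂ : t₂.Char → ℝ := fun c₂ => ∑ s₂ : Bool, transProb p₂ s s₂ * t₂.charProb s₂ c₂ with hg₂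
  have hV : ∀ (t : PTree) (p : ℝ) (Sx : Finset Bool),
      (∑ c : t.Char, if t.fitch c = Sx then
        (∑ s' : Bool, transProb p s s' * t.charProb s' c) else 0) = EW p t s Sx := by
    intro t p Sx
    have : ∀ c : t.Char, (if t.fitch c = Sx then
        (∑ s' : Bool, transProb p s s' * t.charProb s' c) else 0) =
        transProb p s true * (if t.fitch c = Sx then t.charProb true c else 0) +
        transProb p s false * (if t.fitch c = Sx then t.charProb false c else 0) := by
      intro c
      rw [Fintype.sum_bool]
      split <;> simp
    rw [Finset.sum_congr rfl fun c _ => this c, Finset.sum_add_distrib]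
    simp only [← Finset.mul_sum]
    rfl
  have step0 : Wf (.node p₁ p₂ t₁ t₂) s S =
      ∑ c₁ : t₁.Char, ∑ c₂ : t₂.Char,
        (Φ (t₁.fitch c₁) (t₂.fitch c₂)) * (g₁ c₁ * g₂ c₂) := by
    show (∑ c : t₁.Char × t₂.Char, if cmb (t₁.fitch c.1) (t₂.fitch c.2) = S
        then g₁ c.1 * g₂ c.2 else 0) = _
    rw [Fintype.sum_prod_type]
    apply Finset.sum_congr rfl; intro c₁ _
    apply Finset.sum_congr rfl; intro c₂ _
    rw [hΦ]
    split <;> simp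
  rw [step0]
  have step1 : ∀ c₁ : t₁.Char,
      (∑ c₂ : t₂.Char, (Φ (t₁.fitch c₁) (t₂.fitch c₂)) * (g₁ c₁ * g₂ c₂)) =
      (Φ (t₁.fitch c₁) {true} * EW p₂ t₂ s {true} +
       Φ (t₁.fitch c₁) {false} * EW p₂ t₂ s {false} +
       Φ (t₁.fitch c₁) {true, false} * EW p₂ t₂ s {true, false}) * g₁ c₁ := by
    intro c₁
    have := key t₂ (fun c₂ => g₁ c₁ * g₂ c₂) (fun Sx => Φ (t₁.fitch c₁) Sx)
    rw [this]
    have e : ∀ Sx : Finset Bool, (∑ c₂ : t₂.Char, if t₂.fitch c₂ = Sx then g₁ c₁ * g₂ c₂ else 0)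
        = g₁ c₁ * ∑ c₂ : t₂.Char, if t₂.fitch c₂ = Sx then g₂ c₂ else 0 := by
      intro Sx
      rw [Finset.mul_sum]
      apply Finset.sum_congr rfl; intro c₂ _
      split <;> simp
    rw [e, e, e, hV t₂ p₂, hV t₂ p₂, hV t₂ p₂]
    ring
  rw [Finset.sum_congr rfl fun c₁ _ => step1 c₁]
  rw [key t₁ g₁ (fun Sx => Φ Sx {true} * EW p₂ t₂ s {true} +
       Φ Sx {false} * EW p₂ t₂ s {false} + Φ Sx {true, false} * EW p₂ t₂ s {true, false})]
  rw [hV t₁ p₁, hV t₁ p₁, hV t₁ p₁]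
  ring
noncomputable def aT (q : ℝ) (n : ℕ) : ℝ := Wf (balanced q n) true {true}
noncomputable def bT (q : ℝ) (n : ℕ) : ℝ := Wf (balanced q n) true {false}
noncomputable def zT (q : ℝ) (n : ℕ) : ℝ := Wf (balanced q n) true {true, false}
noncomputable def aF (q : ℝ) (n : ℕ) : ℝ := Wf (balanced q n) false {true}
noncomputable def bF (q : ℝ) (n : ℕ) : ℝ := Wf (balanced q n) false {false}
noncomputable def zF (q : ℝ) (n : ℕ) : ℝ := Wf (balanced q n) false {true, false}

lemma Palpha_eq (q : ℝ) (n : ℕ) : Palpha n q = aT q n := rfl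

lemma Wf_leaf (s : Bool) (S : Finset Bool) :
    Wf .leaf s S = (if ({true} : Finset Bool) = S then (if true = s then (1:ℝ) else 0) else 0) +
      (if ({false} : Finset Bool) = S then (if false = s then (1:ℝ) else 0) else 0) := by
  show (∑ c : Bool, if PTree.fitch .leaf c = S then PTree.charProb .leaf s c else 0) = _
  rw [Fintype.sum_bool]
  rfl

lemma aT_zero (q : ℝ) : aT q 0 = 1 := by simp [aT, Wf_leaf, balanced]
lemma bT_zero (q : ℝ) : bT q 0 = 0 := by
  simp [bT, Wf_leaf, balanced, show ({true} : Finset Bool) ≠ {false} by decide]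
lemma zT_zero (q : ℝ) : zT q 0 = 0 := by
  simp [zT, Wf_leaf, balanced, show ({true} : Finset Bool) ≠ {true, false} by decide,
    show ({false} : Finset Bool) ≠ {true, false} by decide]
lemma aF_zero (q : ℝ) : aF q 0 = 0 := by simp [aF, Wf_leaf, balanced]
lemma bF_zero (q : ℝ) : bF q 0 = 1 := by
  simp [bF, Wf_leaf, balanced, show ({true} : Finset Bool) ≠ {false} by decide]
lemma zF_zero (q : ℝ) : zF q 0 = 0 := by
  simp [zF, Wf_leaf, balanced, show ({true} : Finset Bool) ≠ {true, false} by decide,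
    show ({false} : Finset Bool) ≠ {true, false} by decide]

section recursions
variable (q : ℝ) (n : ℕ)

private lemma EW_true (t : PTree) (S : Finset Bool) :
    EW q t true S = (1 - q) * Wf t true S + q * Wf t false S := by
  simp [EW, transProb]

private lemma EW_false (t : PTree) (S : Finset Bool) :
    EW q t false S = q * Wf t true S + (1 - q) * Wf t false S := by
  simp [EW, transProb]

lemma aT_succ : aT q (n + 1) =
    ((1-q) * aT q n + q * aF q n)^2 +
    2 * ((1-q) * aT q n + q * aF q n) * ((1-q) * zT q n + q * zF q n) := by
  have h := Wf_node q q (balanced q n) (balanced q n) true {true}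
    (fun S₁ S₂ => if cmb S₁ S₂ = {true} then 1 else 0) (fun _ _ => rfl)
  simp only [aT, bT, zT, aF, bF, zF]
  rw [show balanced q (n+1) = .node q q (balanced q n) (balanced q n) from rfl, h]
  norm_num [show cmb {true} {true} = {true} from by decide,
    show cmb {true} {false} = {true, false} from by decide,
    show cmb {true} {true, false} = {true} from by decide,
    show cmb {false} {true} = {true, false} from by decide,
    show cmb {false} {false} = {false} from by decide,
    show cmb {false} {true, false} = {false} from by decide,
    show cmb {true, false} {true} = {true} from by decide,
    show cmb {true, false} {false} = {false} from by decide,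
    show cmb {true, false} {true, false} = {true, false} from by decide,
    show ({true,false} : Finset Bool) ≠ {true} from by decide,
    show ({false} : Finset Bool) ≠ {true} from by decide, EW_true, EW_false]
  ring
lemma bT_succ : bT q (n + 1) = ((1-q) * bT q n + q * bF q n)^2 + 2 * ((1-q) * bT q n + q * bF q n) * ((1-q) * zT q n + q * zF q n) := by
  have h := Wf_node q q (balanced q n) (balanced q n) true ({false})
    (fun S₁ S₂ => if cmb S₁ S₂ = ({false}) then 1 else 0) (fun _ _ => rfl)
  simp only [aT, bT, zT, aF, bF, zF]
  rw [show balanced q (n+1) = .node q q (balanced q n) (balanced q n) from rfl, h]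
  norm_num [show cmb {true} {true} = {true} from by decide,
    show cmb {true} {false} = {true, false} from by decide,
    show cmb {true} {true, false} = {true} from by decide,
    show cmb {false} {true} = {true, false} from by decide,
    show cmb {false} {false} = {false} from by decide,
    show cmb {true, false} {true} = {true} from by decide,
    show cmb {false} {true, false} = {false} from by decide,
    show cmb {true, false} {false} = {false} from by decide,
    show cmb {true, false} {true, false} = {true, false} from by decide,
    show ({true,false} : Finset Bool) ≠ {true} from by decide,
    show ({true,false} : Finset Bool) ≠ {false} from by decide,
    show ({true} : Finset Bool) ≠ {false} from by decide,
    show ({true} : Finset Bool) ≠ {true, false} from by decide,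
    show ({false} : Finset Bool) ≠ {true} from by decide,
    show ({false} : Finset Bool) ≠ {true, false} from by decide, EW_true, EW_false]
  ring

lemma zT_succ : zT q (n + 1) = ((1-q) * zT q n + q * zF q n)^2 + 2 * ((1-q) * aT q n + q * aF q n) * ((1-q) * bT q n + q * bF q n) := by
  have h := Wf_node q q (balanced q n) (balanced q n) true ({true, false})
    (fun S₁ S₂ => if cmb S₁ S₂ = ({true, false}) then 1 else 0) (fun _ _ => rfl)
  simp only [aT, bT, zT, aF, bF, zF]
  rw [show balanced q (n+1) = .node q q (balanced q n) (balanced q n) from rfl, h]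
  norm_num [show cmb {true} {true} = {true} from by decide,
    show cmb {true} {false} = {true, false} from by decide,
    show cmb {true} {true, false} = {true} from by decide,
    show cmb {false} {true} = {true, false} from by decide,
    show cmb {false} {false} = {false} from by decide,
    show cmb {true, false} {true} = {true} from by decide,
    show cmb {false} {true, false} = {false} from by decide,
    show cmb {true, false} {false} = {false} from by decide,
    show cmb {true, false} {true, false} = {true, false} from by decide,
    show ({true,false} : Finset Bool) ≠ {true} from by decide,
    show ({true,false} : Finset Bool) ≠ {false} from by decide,
    show ({true} : Finset Bool) ≠ {false} from by decide,
    show ({true} : Finset Bool) ≠ {true, false} from by decide,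
    show ({false} : Finset Bool) ≠ {true} from by decide,
    show ({false} : Finset Bool) ≠ {true, false} from by decide, EW_true, EW_false]
  ring

lemma aF_succ : aF q (n + 1) = (q * aT q n + (1-q) * aF q n)^2 + 2 * (q * aT q n + (1-q) * aF q n) * (q * zT q n + (1-q) * zF q n) := by
  have h := Wf_node q q (balanced q n) (balanced q n) false ({true})
    (fun S₁ S₂ => if cmb S₁ S₂ = ({true}) then 1 else 0) (fun _ _ => rfl)
  simp only [aT, bT, zT, aF, bF, zF]
  rw [show balanced q (n+1) = .node q q (balanced q n) (balanced q n) from rfl, h]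
  norm_num [show cmb {true} {true} = {true} from by decide,
    show cmb {true} {false} = {true, false} from by decide,
    show cmb {true} {true, false} = {true} from by decide,
    show cmb {false} {true} = {true, false} from by decide,
    show cmb {false} {false} = {false} from by decide,
    show cmb {true, false} {true} = {true} from by decide,
    show cmb {false} {true, false} = {false} from by decide,
    show cmb {true, false} {false} = {false} from by decide,
    show cmb {true, false} {true, false} = {true, false} from by decide,
    show ({true,false} : Finset Bool) ≠ {true} from by decide,
    show ({true,false} : Finset Bool) ≠ {false} from by decide,
    show ({true} : Finset Bool) ≠ {false} from by decide,
    show ({true} : Finset Bool) ≠ {true, false} from by decide,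
    show ({false} : Finset Bool) ≠ {true} from by decide,
    show ({false} : Finset Bool) ≠ {true, false} from by decide, EW_true, EW_false]
  ring

lemma bF_succ : bF q (n + 1) = (q * bT q n + (1-q) * bF q n)^2 + 2 * (q * bT q n + (1-q) * bF q n) * (q * zT q n + (1-q) * zF q n) := by
  have h := Wf_node q q (balanced q n) (balanced q n) false ({false})
    (fun S₁ S₂ => if cmb S₁ S₂ = ({false}) then 1 else 0) (fun _ _ => rfl)
  simp only [aT, bT, zT, aF, bF, zF]
  rw [show balanced q (n+1) = .node q q (balanced q n) (balanced q n) from rfl, h]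
  norm_num [show cmb {true} {true} = {true} from by decide,
    show cmb {true} {false} = {true, false} from by decide,
    show cmb {true} {true, false} = {true} from by decide,
    show cmb {false} {true} = {true, false} from by decide,
    show cmb {false} {false} = {false} from by decide,
    show cmb {true, false} {true} = {true} from by decide,
    show cmb {false} {true, false} = {false} from by decide,
    show cmb {true, false} {false} = {false} from by decide,
    show cmb {true, false} {true, false} = {true, false} from by decide,
    show ({true,false} : Finset Bool) ≠ {true} from by decide,
    show ({true,false} : Finset Bool) ≠ {false} from by decide,
    show ({true} : Finset Bool) ≠ {false} from by decide,
    show ({true} : Finset Bool) ≠ {true, false} from by decide,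
    show ({false} : Finset Bool) ≠ {true} from by decide,
    show ({false} : Finset Bool) ≠ {true, false} from by decide, EW_true, EW_false]
  ring

lemma zF_succ : zF q (n + 1) = (q * zT q n + (1-q) * zF q n)^2 + 2 * (q * aT q n + (1-q) * aF q n) * (q * bT q n + (1-q) * bF q n) := by
  have h := Wf_node q q (balanced q n) (balanced q n) false ({true, false})
    (fun S₁ S₂ => if cmb S₁ S₂ = ({true, false}) then 1 else 0) (fun _ _ => rfl)
  simp only [aT, bT, zT, aF, bF, zF]
  rw [show balanced q (n+1) = .node q q (balanced q n) (balanced q n) from rfl, h]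
  norm_num [show cmb {true} {true} = {true} from by decide,
    show cmb {true} {false} = {true, false} from by decide,
    show cmb {true} {true, false} = {true} from by decide,
    show cmb {false} {true} = {true, false} from by decide,
    show cmb {false} {false} = {false} from by decide,
    show cmb {true, false} {true} = {true} from by decide,
    show cmb {false} {true, false} = {false} from by decide,
    show cmb {true, false} {false} = {false} from by decide,
    show cmb {true, false} {true, false} = {true, false} from by decide,
    show ({true,false} : Finset Bool) ≠ {true} from by decide,
    show ({true,false} : Finset Bool) ≠ {false} from by decide,
    show ({true} : Finset Bool) ≠ {false} from by decide,
    show ({true} : Finset Bool) ≠ {true, false} from by decide,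
    show ({false} : Finset Bool) ≠ {true} from by decide,
    show ({false} : Finset Bool) ≠ {true, false} from by decide, EW_true, EW_false]
  ring

end recursions

lemma coreU (q G : ℝ) (h0 : 0 < q) (h8 : 8*q ≤ 1) (hG0 : 0 ≤ G) (hG1 : G ≤ 8*q^2*(1-q)) :
    0 ≤ (4*q - 48*q^2 + 128*q^3) + G*(4*q - 4*q^2 - 224*q^3 + 192*q^4)
      + G^2*(4 + 4*q + 40*q^2 - 32*q^3) - 3*G^3 := by
  have h4 : (0:ℝ) ≤ 1 - 4*q := by linarith
  have h8' : (0:ℝ) ≤ 1 - 8*q := by linarith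
  have h1 : 0 ≤ 4*q*((1-4*q)*(1-8*q)) :=
    mul_nonneg (by linarith) (mul_nonneg h4 h8')
  have hf : (0:ℝ) ≤ 1 - q - 56*q^2 + 48*q^3 := by nlinarith
  have h2 : 0 ≤ G*(4*q)*(1 - q - 56*q^2 + 48*q^3) :=
    mul_nonneg (mul_nonneg hG0 (by linarith)) hf
  have h3 : 0 ≤ G^2*((4 + 4*q + 40*q^2 - 32*q^3) - 3*G) := by
    have : 3*G ≤ 24*q^2*(1-q) := by linarith
    nlinarith [sq_nonneg G, sq_nonneg q]
  nlinarith [h1, h2, h3]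

lemma coreL1 (q G : ℝ) (h0 : 0 < q) (h8 : 8*q ≤ 1) (hG0 : 0 ≤ G) (hG1 : G ≤ 8*q^2*(1-q)) :
    0 ≤ (8*q - 24*q^2 - 32*q^3) + G*(-7 + 28*q + 32*q^2) + G^2*(-2 - 20*q) + 3*G^3 := by
  have h8' : (0:ℝ) ≤ 1 - 8*q := by linarith
  -- G*(7-28q-32q^2) ≤ 8q^2(1-q)*(7-28q-32q^2)
  have hb : (0:ℝ) ≤ 7 - 28*q - 32*q^2 := by nlinarith
  have h2 : G*(7 - 28*q - 32*q^2) ≤ 8*q^2*(1-q)*(7 - 28*q - 32*q^2) :=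
    mul_le_mul_of_nonneg_right hG1 hb
  -- main positive part: 8q(1-4q)(1+q) - 8q^2(1-q)(7-28q-32q^2) = 8q*g, g ≥ 15q^2 + (1-8q)(1-2q) - 32q^4 + 4q^3
  have hg : 8*q^2*(1-q)*(7 - 28*q - 32*q^2) + 2*(8*q^2*(1-q))^2*(1+10*q) ≤ 8*q*((1-4*q)*(1+q)) := by
    nlinarith [mul_nonneg (mul_nonneg h0.le h0.le) h0.le, sq_nonneg q,
      mul_nonneg (mul_nonneg (mul_nonneg h0.le h0.le) h0.le) h0.le,
      mul_nonneg (mul_nonneg (mul_nonneg (mul_nonneg h0.le h0.le) h0.le) h0.le) h0.le,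
      mul_nonneg h8' h0.le, mul_nonneg (mul_nonneg h8' h0.le) h0.le,
      mul_nonneg (mul_nonneg (mul_nonneg h8' h0.le) h0.le) h0.le,
      mul_nonneg (mul_nonneg (mul_nonneg (mul_nonneg h8' h0.le) h0.le) h0.le) h0.le]
  -- G^2(2+20q) ≤ (8q^2(1-q))^2 (2+20q)
  have h3 : G^2*(2 + 20*q) ≤ (8*q^2*(1-q))^2*(2+20*q) := by
    have : G^2 ≤ (8*q^2*(1-q))^2 := by nlinarith
    nlinarith [h0.le]
  have h4 : 0 ≤ 3*G^3 := by positivity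
  nlinarith [h2, hg, h3, h4]

lemma coreL2 (q G : ℝ) (h0 : 0 < q) (h8 : 8*q ≤ 1) (hG0 : 0 ≤ G) (hG1 : G ≤ 8*q^2*(1-q)) :
    0 ≤ (8*q - 64*q^2 + 240*q^3 - 512*q^4 + 256*q^5) + G*(-4*q + 4*q^2 + 224*q^3 - 192*q^4)
      + G^2*(-4 - 4*q - 40*q^2 + 32*q^3) + 3*G^3 := by
  have h8' : (0:ℝ) ≤ 1 - 8*q := by linarith
  have hq3 : (0:ℝ) ≤ q^3 := by positivity
  -- G*(4q)*f ≤ 4q*G ≤ 32 q^3 (1-q)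
  have hf1 : G*(4*q - 4*q^2 - 224*q^3 + 192*q^4) ≥ -(4*q*G) := by
    nlinarith [mul_nonneg hG0 h0.le, mul_nonneg (mul_nonneg hG0 h0.le) h0.le,
      mul_nonneg (mul_nonneg (mul_nonneg hG0 h0.le) h0.le) h0.le]
  have hf2 : 4*q*G ≤ 32*q^3*(1-q) := by nlinarith [mul_le_mul_of_nonneg_left hG1 (by linarith : (0:ℝ) ≤ 4*q)]
  -- G^2 * B ≤ 64 q^4 * 6
  have hB : G^2*(4 + 4*q + 40*q^2 - 32*q^3) ≤ 384*q^4 := by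
    have h1 : G^2 ≤ 64*q^4 := by nlinarith [sq_nonneg (q^2*(1-q))]
    have h2 : (4:ℝ) + 4*q + 40*q^2 - 32*q^3 ≤ 6 := by nlinarith
    nlinarith [sq_nonneg G]
  have h4 : 0 ≤ 3*G^3 := by positivity
  -- main: 8q - 64q^2 + 240q^3 - 512q^4 + 256 q^5 - 32q^3(1-q) - 384q^4 ≥ 0
  have main : 32*q^3*(1-q) + 384*q^4 ≤ 8*q - 64*q^2 + 240*q^3 - 512*q^4 + 256*q^5 := by
    nlinarith [mul_nonneg (mul_nonneg h0.le h0.le) h0.le, sq_nonneg q,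
      mul_nonneg (mul_nonneg (mul_nonneg h0.le h0.le) h0.le) h0.le,
      mul_nonneg (mul_nonneg (mul_nonneg (mul_nonneg h0.le h0.le) h0.le) h0.le) h0.le,
      mul_nonneg (mul_nonneg (mul_nonneg h8' h0.le) h0.le) h0.le,
      mul_nonneg (mul_nonneg (mul_nonneg (mul_nonneg h8' h0.le) h0.le) h0.le) h0.le]
  nlinarith [hf1, hf2, hB, h4, main]
lemma symm_lemma (q : ℝ) : ∀ n, aF q n = bT q n ∧ bF q n = aT q n ∧ zF q n = zT q n := by
  intro n
  induction n with
  | zero => refine ⟨?_, ?_, ?_⟩ <;>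
      simp [aF_zero, bT_zero, bF_zero, aT_zero, zF_zero, zT_zero]
  | succ n ih =>
    obtain ⟨h1, h2, h3⟩ := ih
    refine ⟨?_, ?_, ?_⟩
    · rw [aF_succ, bT_succ, h1, h2, h3]; ring
    · rw [bF_succ, aT_succ, h1, h2, h3]; ring
    · rw [zF_succ, zT_succ, h1, h2, h3]; ring

lemma sum_one (q : ℝ) : ∀ n, aT q n + bT q n + zT q n = 1 := by
  intro n
  induction n with
  | zero => rw [aT_zero, bT_zero, zT_zero]; norm_num
  | succ n ih =>
    obtain ⟨h1, h2, h3⟩ := symm_lemma q n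
    rw [aT_succ, bT_succ, zT_succ, h1, h2, h3]
    linear_combination (((1-q) * aT q n + q * bT q n) + ((1-q) * bT q n + q * aT q n) +
      ((1-q) * zT q n + q * zT q n) + 1) * ih

/-- clean recursions in terms of root-state-true quantities only -/
lemma aT_rec (q : ℝ) (n : ℕ) : aT q (n+1) =
    ((1-q) * aT q n + q * bT q n)^2 +
    2 * ((1-q) * aT q n + q * bT q n) * zT q n := by
  obtain ⟨h1, h2, h3⟩ := symm_lemma q n
  rw [aT_succ, h1, h3]; ring

lemma bT_rec (q : ℝ) (n : ℕ) : bT q (n+1) =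
    ((1-q) * bT q n + q * aT q n)^2 +
    2 * ((1-q) * bT q n + q * aT q n) * zT q n := by
  obtain ⟨h1, h2, h3⟩ := symm_lemma q n
  rw [bT_succ, h2, h3]; ring

lemma zT_rec (q : ℝ) (n : ℕ) : zT q (n+1) =
    zT q n ^ 2 + 2 * ((1-q) * aT q n + q * bT q n) * ((1-q) * bT q n + q * aT q n) := by
  obtain ⟨h1, h2, h3⟩ := symm_lemma q n
  rw [zT_succ, h1, h2, h3]; ring
def MPInv (q : ℝ) (n : ℕ) : Prop :=
  2*q - 4*q^2 ≤ zT q n ∧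
  0 < 2*q - (1-2*q) * zT q n ∧
  ((1-2*q) * (aT q n - bT q n))^2 ≤ (1 - zT q n)*(1 - 3*zT q n) ∧
  (1 - zT q n)*(1 - 3*zT q n) - 2*(1-4*q)*(2*q - (1-2*q)*zT q n)
      ≤ ((1-2*q) * (aT q n - bT q n))^2 ∧
  0 ≤ aT q n - bT q n

lemma aT_one (q : ℝ) : aT q 1 = (1-q)^2 := by
  rw [aT_rec, aT_zero, bT_zero, zT_zero]; ring
lemma bT_one (q : ℝ) : bT q 1 = q^2 := by
  rw [bT_rec, aT_zero, bT_zero, zT_zero]; ring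
lemma zT_one (q : ℝ) : zT q 1 = 2*q - 2*q^2 := by
  rw [zT_rec, aT_zero, bT_zero, zT_zero]; ring

lemma aT_two (q : ℝ) : aT q 2 = 1 - 2*q - q^2 + 6*q^3 - 3*q^4 := by
  rw [aT_rec, aT_one, bT_one, zT_one]; ring
lemma bT_two (q : ℝ) : bT q 2 = 5*q^2 - 10*q^3 + 5*q^4 := by
  rw [bT_rec, aT_one, bT_one, zT_one]; ring
lemma zT_two (q : ℝ) : zT q 2 = 2*q - 4*q^2 + 4*q^3 - 2*q^4 := by
  rw [zT_rec, aT_one, bT_one, zT_one]; ring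

lemma MPInv_two (q : ℝ) (hq0 : 0 < q) (hq1 : q < 1/8) : MPInv q 2 := by
  have h8 : 8*q < 1 := by linarith
  rw [MPInv, aT_two, bT_two, zT_two]
  have hq3 : (0:ℝ) ≤ q^3 := by positivity
  have hq2 : (0:ℝ) < q^2 := by positivity
  have hq4 : (0:ℝ) ≤ q^4 := by positivity
  refine ⟨by nlinarith [hq3, hq4], by nlinarith [hq2, hq3, hq4, mul_pos hq2 hq0],
    ?_, ?_, by nlinarith [hq3, hq4, sq_nonneg q]⟩
  · -- 16q^2 - 136q^3 + ... ≥ 0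
    nlinarith [sq_nonneg (86*q - 17), sq_nonneg q, sq_nonneg (q*q), sq_nonneg (q^2*(1-8*q)),
      mul_nonneg (mul_nonneg hq0.le hq0.le) hq0.le, sq_nonneg (q^3),
      mul_nonneg (mul_nonneg (mul_nonneg hq0.le hq0.le) hq0.le) (by linarith : (0:ℝ) ≤ 1 - 8*q),
      mul_nonneg (mul_nonneg (mul_nonneg (mul_nonneg hq0.le hq0.le) hq0.le) hq0.le) (by linarith : (0:ℝ) ≤ 1 - 8*q),
      mul_nonneg (mul_nonneg (mul_nonneg (mul_nonneg (mul_nonneg hq0.le hq0.le) hq0.le) hq0.le) hq0.le) (by linarith : (0:ℝ) ≤ 1 - 8*q)]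
  · nlinarith [sq_nonneg q, sq_nonneg (q*q), mul_nonneg (mul_nonneg hq0.le hq0.le) hq0.le,
      mul_nonneg (mul_nonneg (mul_nonneg hq0.le hq0.le) hq0.le) (by linarith : (0:ℝ) ≤ 1 - 8*q),
      mul_nonneg (mul_nonneg (mul_nonneg (mul_nonneg hq0.le hq0.le) hq0.le) hq0.le) (by linarith : (0:ℝ) ≤ 1 - 8*q),
      mul_nonneg (mul_nonneg (mul_nonneg (mul_nonneg (mul_nonneg hq0.le hq0.le) hq0.le) hq0.le) hq0.le) (by linarith : (0:ℝ) ≤ 1 - 8*q)]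
set_option maxHeartbeats 4000000 in
lemma hdiv_aux : ∀ x y : ℝ, 0 < y → 0 ≤ y * x → 0 ≤ x := by
  intro x y hy hxy
  by_contra hx
  push_neg at hx
  nlinarith [mul_pos hy (neg_pos.mpr hx)]

set_option maxHeartbeats 4000000 in
lemma MPInv_step (q : ℝ) (hq0 : 0 < q) (hq1 : q < 1/8) (n : ℕ) (h : MPInv q n) :
    MPInv q (n+1) := by
  obtain ⟨I1, I2, I3, I4, I5⟩ := h
  have hsum := sum_one q n
  have h2q : (0:ℝ) < 1 - 2*q := by linarith
  have h8 : 8*q ≤ 1 := by linarith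
  set A := aT q n with hA
  set C := zT q n with hCdef
  have hB : bT q n = 1 - A - C := by linarith
  rw [hB] at I3 I4 I5
  rw [MPInv, aT_rec, bT_rec, zT_rec, hB, ← hA, ← hCdef]
  have hc0 : (0:ℝ) ≤ C := by nlinarith [I1]
  have hG0 : (0:ℝ) < (2*q - (1-2*q)*C) := I2
  have hG8 : (2*q - (1-2*q)*C) ≤ 8*q^2*(1-q) := by nlinarith [mul_le_mul_of_nonneg_left I1 h2q.le]
  have hE0 : (0:ℝ) ≤ (((1 - C)*(1 - 3*C)) - (((1-2*q)*(2*A + C - 1))^2)) := by nlinarith [I3]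
  have hEe : (((1 - C)*(1 - 3*C)) - (((1-2*q)*(2*A + C - 1))^2)) ≤ (2*(1-4*q)*(2*q - (1-2*q)*C)) := by nlinarith [I4]
  have hI5 : (0:ℝ) ≤ 2*A + C - 1 := by linarith [I5]
  -- core inequalities instantiated
  have hcU := coreU q (2*q - (1-2*q)*C) hq0 h8 hG0.le hG8
  have hcL1 := coreL1 q (2*q - (1-2*q)*C) hq0 h8 hG0.le hG8
  have hcL2 := coreL2 q (2*q - (1-2*q)*C) hq0 h8 hG0.le hG8
  have h2q2 : (0:ℝ) < (1-2*q)^2 := by positivity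
  -- M0 ≥ 0
  have hM0 : (0:ℝ) ≤ (((1 - (C + (1-4*q)*(2*q - (1-2*q)*C)))*(1 - 3*(C + (1-4*q)*(2*q - (1-2*q)*C)))) - ((1 - (2*q - (1-2*q)*C))^2)*(((1 - C)*(1 - 3*C)) - (2*(1-4*q)*(2*q - (1-2*q)*C)))) := by
    apply hdiv_aux _ ((1-2*q)^2) h2q2
    have : (1-2*q)^2 * (((1 - (C + (1-4*q)*(2*q - (1-2*q)*C)))*(1 - 3*(C + (1-4*q)*(2*q - (1-2*q)*C)))) - ((1 - (2*q - (1-2*q)*C))^2)*(((1 - C)*(1 - 3*C)) - (2*(1-4*q)*(2*q - (1-2*q)*C)))) = (2*q - (1-2*q)*C) * ((4*q - 48*q^2 + 128*q^3) + (2*q - (1-2*q)*C)*(4*q - 4*q^2 - 224*q^3 + 192*q^4) + (2*q - (1-2*q)*C)^2*(4 + 4*q + 40*q^2 - 32*q^3) - 3*(2*q - (1-2*q)*C)^3) := by ring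
    rw [this]
    exact mul_nonneg hG0.le hcU
  have hN0 : (0:ℝ) ≤ (((1 - (2*q - (1-2*q)*C))^2)*((1 - C)*(1 - 3*C)) - ((1 - C)*(1 - 3*C)) + 2*(1-4*q)*(2*q - (1-2*q)*C)) := by
    apply hdiv_aux _ ((1-2*q)^2) h2q2
    have : (1-2*q)^2 * (((1 - (2*q - (1-2*q)*C))^2)*((1 - C)*(1 - 3*C)) - ((1 - C)*(1 - 3*C)) + 2*(1-4*q)*(2*q - (1-2*q)*C)) = (2*q - (1-2*q)*C) * ((8*q - 24*q^2 - 32*q^3) + (2*q - (1-2*q)*C)*(-7 + 28*q + 32*q^2) + (2*q - (1-2*q)*C)^2*(-2 - 20*q) + 3*(2*q - (1-2*q)*C)^3) := by ring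
    rw [this]
    exact mul_nonneg hG0.le hcL1
  have hNe0 : (0:ℝ) ≤ (((1 - (2*q - (1-2*q)*C))^2)*(((1 - C)*(1 - 3*C)) - (2*(1-4*q)*(2*q - (1-2*q)*C))) - ((1 - (C + (1-4*q)*(2*q - (1-2*q)*C)))*(1 - 3*(C + (1-4*q)*(2*q - (1-2*q)*C)))) + 2*(1-4*q)*((2*q - (1-2*q)*C)*(6*q-8*q^2))) := by
    apply hdiv_aux _ ((1-2*q)^2) h2q2
    have : (1-2*q)^2 * (((1 - (2*q - (1-2*q)*C))^2)*(((1 - C)*(1 - 3*C)) - (2*(1-4*q)*(2*q - (1-2*q)*C))) - ((1 - (C + (1-4*q)*(2*q - (1-2*q)*C)))*(1 - 3*(C + (1-4*q)*(2*q - (1-2*q)*C)))) + 2*(1-4*q)*((2*q - (1-2*q)*C)*(6*q-8*q^2))) = (2*q - (1-2*q)*C) * ((8*q - 64*q^2 + 240*q^3 - 512*q^4 + 256*q^5) + (2*q - (1-2*q)*C)*(-4*q + 4*q^2 + 224*q^3 - 192*q^4) + (2*q - (1-2*q)*C)^2*(-4 - 4*q - 40*q^2 + 32*q^3) + 3*(2*q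 - (1-2*q)*C)^3) := by ring
    rw [this]
    exact mul_nonneg hG0.le hcL2
  -- bracket ≤ 0
  have hbrD : (1-2*q) * (3*C - 2 + ((1 - (2*q - (1-2*q)*C))^2) + (3/4)*((((1 - C)*(1 - 3*C)) - (((1-2*q)*(2*A + C - 1))^2)) + (2*(1-4*q)*(2*q - (1-2*q)*C)))) ≤ 0 := by
    nlinarith [mul_le_mul_of_nonneg_left hEe (by linarith : (0:ℝ) ≤ (3:ℝ)/4*(1-2*q)),
      mul_nonneg hG0.le (by nlinarith : (0:ℝ) ≤ 2 + 14*q - 32*q^2 + 24*q^3 - 16*q^4),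
      mul_le_mul_of_nonneg_left hG8 (mul_nonneg h2q.le hG0.le)]
  have hbr : (3*C - 2 + ((1 - (2*q - (1-2*q)*C))^2) + (3/4)*((((1 - C)*(1 - 3*C)) - (((1-2*q)*(2*A + C - 1))^2)) + (2*(1-4*q)*(2*q - (1-2*q)*C)))) ≤ 0 := by
    by_contra hx
    push_neg at hx
    nlinarith [mul_pos h2q hx]
  have hprod : (0:ℝ) ≤ ((2*(1-4*q)*(2*q - (1-2*q)*C)) - (((1 - C)*(1 - 3*C)) - (((1-2*q)*(2*A + C - 1))^2))) * (-(3*C - 2 + ((1 - (2*q - (1-2*q)*C))^2) + (3/4)*((((1 - C)*(1 - 3*C)) - (((1-2*q)*(2*A + C - 1))^2)) + (2*(1-4*q)*(2*q - (1-2*q)*C))))) :=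
    mul_nonneg (by linarith) (by linarith)
  -- N(E) ≥ 0
  have heps0 : (0:ℝ) < (2*(1-4*q)*(2*q - (1-2*q)*C)) := by nlinarith [hG0]
  have hNE : (0:ℝ) ≤ (((1 - (2*q - (1-2*q)*C))^2)*(((1 - C)*(1 - 3*C)) - (((1 - C)*(1 - 3*C)) - (((1-2*q)*(2*A + C - 1))^2))) - (1 - (C + (((1 - C)*(1 - 3*C)) - (((1-2*q)*(2*A + C - 1))^2))/2))*(1 - 3*(C + (((1 - C)*(1 - 3*C)) - (((1-2*q)*(2*A + C - 1))^2))/2)) + 2*(1-4*q)*((2*q - (1-2*q)*C) - (1-2*q)*(((1 - C)*(1 - 3*C)) - (((1-2*q)*(2*A + C - 1))^2))/2)) := by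
    apply hdiv_aux _ (2*(1-4*q)*(2*q - (1-2*q)*C)) heps0
    linarith [mul_nonneg (by linarith : (0:ℝ) ≤ (2*(1-4*q)*(2*q - (1-2*q)*C)) - (((1 - C)*(1 - 3*C)) - (((1-2*q)*(2*A + C - 1))^2))) hN0,
      mul_nonneg hE0 hNe0,
      mul_nonneg (mul_nonneg heps0.le hE0) (by linarith : (0:ℝ) ≤ (2*(1-4*q)*(2*q - (1-2*q)*C)) - (((1 - C)*(1 - 3*C)) - (((1-2*q)*(2*A + C - 1))^2)))]
  refine ⟨by linarith [hE0, I1], ?_, ?_, ?_, ?_⟩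
  · -- 0 < G'
    nlinarith [mul_le_mul_of_nonneg_left hEe h2q.le,
      mul_pos hG0 (by nlinarith : (0:ℝ) < 6*q - 8*q^2)]
  · -- u' ≤ h(C')
    linarith [hM0, hprod]
  · -- h(C') - 2(1-4q)G' ≤ u'
    linarith [hNE]
  · -- 0 ≤ d'
    nlinarith [mul_nonneg (mul_nonneg h2q.le hI5) (by linarith : (0:ℝ) ≤ 1 + C)]
set_option maxHeartbeats 1000000 in
lemma MPInv_concl (q : ℝ) (hq0 : 0 < q) (hq1 : q < 1/8) (n : ℕ) (h : MPInv q n) :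
    Palpha n q > (1/2) * (1 - 2*q/(1-2*q) + Real.sqrt ((1-8*q)*(1-4*q)) / (1-2*q)^2) := by
  obtain ⟨I1, I2, I3, I4, I5⟩ := h
  have hsum := sum_one q n
  have h2q : (0:ℝ) < 1 - 2*q := by linarith
  have h2q2 : (0:ℝ) < (1-2*q)^2 := by positivity
  set A := aT q n with hA
  set B := bT q n with hB
  set C := zT q n with hC
  set s := Real.sqrt ((1-8*q)*(1-4*q)) with hs
  have hy : (0:ℝ) < (1-2*q)^2*(A-B) + (1-2*q)*(2*q-(1-2*q)*C) := by
    have h1 : (0:ℝ) ≤ (1-2*q)^2*(A-B) := mul_nonneg h2q2.le I5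
    have h2 : (0:ℝ) < (1-2*q)*(2*q-(1-2*q)*C) := mul_pos h2q I2
    linarith
  have hbr2 : (0:ℝ) < (2 - 4*q - 40*q^2 + 32*q^3) + (3+(1-2*q)^2)*(2*q-(1-2*q)*C) := by
    nlinarith [I2, sq_nonneg (1-2*q), mul_nonneg I2.le (sq_nonneg (1-2*q)), sq_nonneg q]
  have hsq : (1-8*q)*(1-4*q) < ((1-2*q)^2*(A-B) + (1-2*q)*(2*q-(1-2*q)*C))^2 := by
    have hI4' := mul_le_mul_of_nonneg_left I4 (sq_nonneg (1-2*q))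
    have hdG : (0:ℝ) ≤ ((1-2*q)^3*(A-B))*(2*q-(1-2*q)*C) :=
      mul_nonneg (mul_nonneg (by positivity) I5) I2.le
    have hGbr : (0:ℝ) < (2*q-(1-2*q)*C) *
        ((2 - 4*q - 40*q^2 + 32*q^3) + (3+(1-2*q)^2)*(2*q-(1-2*q)*C)) := mul_pos I2 hbr2
    nlinarith [hI4', hdG, hGbr]
  have hsqrt : s < (1-2*q)^2*(A-B) + (1-2*q)*(2*q-(1-2*q)*C) :=
    (Real.sqrt_lt' hy).mpr hsq
  have hPa : Palpha n q = A := Palpha_eq q n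
  have key : (1-2*q)^2 - 2*q*(1-2*q) + s < (1 + (A-B) - C)*(1-2*q)^2 := by nlinarith [hsqrt]
  have h2' : ((1-2*q)^2 - 2*q*(1-2*q) + s)/(1-2*q)^2 < 1 + (A-B) - C := by
    rw [div_lt_iff₀ h2q2]; linarith [key]
  have h3' : ((1-2*q)^2 - 2*q*(1-2*q) + s)/(1-2*q)^2 = 1 - 2*q/(1-2*q) + s/(1-2*q)^2 := by
    field_simp
  have hA2 : A = (1 + (A-B) - C)/2 := by linarith [hsum]
  rw [hPa, gt_iff_lt, hA2]
  rw [h3'] at h2'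
  linarith [h2']

/-- For every integer `n ≥ 2` and every `q` with `0 < q < 1/8`,
`P_α(n,q)` exceeds `(1/2)·(1 − 2q/(1−2q) + √((1−8q)(1−4q))/(1−2q)²)`. -/
theorem stmt0 (n : ℕ) (hn : 2 ≤ n) (q : ℝ) (hq0 : 0 < q) (hq1 : q < 1/8) :
    Palpha n q >
      (1/2) * (1 - 2*q/(1-2*q) + Real.sqrt ((1-8*q)*(1-4*q)) / (1-2*q)^2) := by
  have hInv : MPInv q n := by
    induction n, hn using Nat.le_induction with
    | base => exact MPInv_two q hq0 hq1
    | succ m hm ih => exact MPInv_step q hq0 hq1 m ih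
  exact MPInv_concl q hq0 hq1 n hInv
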